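/- An irrational x ∈ [0,1] is very well approximable (there is c > 0 such that infinitely many rationals p/q satisfy |x − p/q| ≤ q^{−(2+c)}, with the right-hand side sharp up to arbitrary small multiplicative constants, i.e. x is q^{−(2+c)}-well approximable) if and only if there exists c > 0 such that log(1 + ω_n) ≥ c ∑_{j=0}^{n−1} log(1 + ω_j) for infinitely many n, where ω_j are the partial quotients of x. -/

import Mathlib

open Real Set

/-- The Gauss map. -/
noncomputable def gaussMap (x : ℝ) : ℝ := if x = 0 then 0 else 1 / x - ⌊1 / x⌋

/-- The n-th partial quotient of x. -/
noncomputable def cfOmega (x : ℝ) (n : ℕ) : ℕ := (⌊1 / (gaussMap^[n] x)⌋).toNat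

/-- (q_{n-1}, q_n) for the convergent denominators of x, with q_{-1} = 0, q_0 = 1. -/
noncomputable def cfQPair (x : ℝ) : ℕ → ℕ × ℕ
  | 0 => (0, 1)
  | n + 1 => ((cfQPair x n).2, cfOmega x n * (cfQPair x n).2 + (cfQPair x n).1)

/-- The denominator q_n of the n-th convergent of x. -/
noncomputable def cfQ (x : ℝ) (n : ℕ) : ℕ := (cfQPair x n).2

/-- (p_{n-1}, p_n) for the convergent numerators of x, with p_{-1} = 1, p_0 = 0. -/
noncomputable def cfPPair (x : ℝ) : ℕ → ℕ × ℕ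
  | 0 => (1, 0)
  | n + 1 => ((cfPPair x n).2, cfOmega x n * (cfPPair x n).2 + (cfPPair x n).1)

/-- The numerator p_n of the n-th convergent of x. -/
noncomputable def cfP (x : ℝ) (n : ℕ) : ℕ := (cfPPair x n).2

lemma gauss_step {y : ℝ} (h : Irrational y) (h0 : y ∈ Ioo (0:ℝ) 1) :
    Irrational (gaussMap y) ∧ gaussMap y ∈ Ioo (0:ℝ) 1 := by
  have hy0 : y ≠ 0 := ne_of_gt h0.1
  have hg : gaussMap y = Int.fract (1 / y) := by
    simp only [gaussMap, hy0, if_false, Int.fract]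
  have hinv : Irrational (1 / y) := by
    rw [one_div]; exact h.inv
  have hfr : Irrational (Int.fract (1 / y)) := by
    unfold Int.fract; exact Irrational.sub_intCast hinv _
  refine ⟨by rwa [hg], ?_, by rw [hg]; exact Int.fract_lt_one _⟩
  rw [hg]
  rcases lt_or_eq_of_le (Int.fract_nonneg (1 / y)) with h' | h'
  · exact h'
  · exact absurd (h' ▸ hfr) (by simp)

lemma y_prop {x : ℝ} (hirr : Irrational x) (h0 : x ∈ Ioo (0:ℝ) 1) (n : ℕ) :
    Irrational (gaussMap^[n] x) ∧ gaussMap^[n] x ∈ Ioo (0:ℝ) 1 := by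
  induction n with
  | zero => exact ⟨hirr, h0⟩
  | succ n ih =>
      rw [Function.iterate_succ_apply']
      exact gauss_step ih.1 ih.2

lemma one_lt_inv_y {x : ℝ} (hirr : Irrational x) (h0 : x ∈ Ioo (0:ℝ) 1) (n : ℕ) :
    1 < 1 / gaussMap^[n] x := by
  have h := (y_prop hirr h0 n).2
  rw [lt_div_iff₀ h.1, one_mul]; exact h.2

lemma omega_cast {x : ℝ} (hirr : Irrational x) (h0 : x ∈ Ioo (0:ℝ) 1) (n : ℕ) :
    ((cfOmega x n : ℤ) : ℝ) = (⌊1 / gaussMap^[n] x⌋ : ℝ) := by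
  have h1 : (1:ℤ) ≤ ⌊1 / gaussMap^[n] x⌋ := by
    rw [Int.le_floor]; exact_mod_cast (one_lt_inv_y hirr h0 n).le
  rw [cfOmega, Int.toNat_of_nonneg (by linarith)]

lemma omega_pos {x : ℝ} (hirr : Irrational x) (h0 : x ∈ Ioo (0:ℝ) 1) (n : ℕ) :
    1 ≤ cfOmega x n := by
  have h1 : (1:ℤ) ≤ ⌊1 / gaussMap^[n] x⌋ := by
    rw [Int.le_floor]; exact_mod_cast (one_lt_inv_y hirr h0 n).le
  rw [cfOmega]; omega

lemma key_id {x : ℝ} (hirr : Irrational x) (h0 : x ∈ Ioo (0:ℝ) 1) (n : ℕ) :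
    gaussMap^[n] x * ((cfOmega x n : ℝ) + gaussMap^[n+1] x) = 1 := by
  have hy := (y_prop hirr h0 n).2
  have hy0 : gaussMap^[n] x ≠ 0 := ne_of_gt hy.1
  have : gaussMap^[n+1] x = 1 / gaussMap^[n] x - ⌊1 / gaussMap^[n] x⌋ := by
    rw [Function.iterate_succ_apply', gaussMap, if_neg hy0]
  rw [this]
  have hoc : ((cfOmega x n : ℝ)) = (⌊1 / gaussMap^[n] x⌋ : ℝ) := by
    exact_mod_cast omega_cast hirr h0 n
  rw [hoc]
  field_simp
  ring

section
variable {x : ℝ} (hirr : Irrational x) (h0 : x ∈ Ioo (0:ℝ) 1)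

lemma qpair_fst (n : ℕ) : (cfQPair x (n+1)).1 = cfQ x n := rfl
lemma q_succ (n : ℕ) : cfQ x (n+1) = cfOmega x n * cfQ x n + (cfQPair x n).1 := rfl
lemma ppair_fst (n : ℕ) : (cfPPair x (n+1)).1 = cfP x n := rfl
lemma p_succ (n : ℕ) : cfP x (n+1) = cfOmega x n * cfP x n + (cfPPair x n).1 := rfl

include hirr h0

lemma q_pos (n : ℕ) : 1 ≤ cfQ x n := by
  induction n with
  | zero => exact le_refl 1
  | succ n ih =>
      have := omega_pos hirr h0 n
      rw [q_succ]
      calc 1 ≤ cfOmega x n * cfQ x n := Nat.one_le_iff_ne_zero.2 (Nat.mul_ne_zero (by omega) (by omega))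
        _ ≤ _ := Nat.le_add_right _ _

lemma qpair_fst_le (n : ℕ) : (cfQPair x n).1 ≤ cfQ x n := by
  induction n with
  | zero => exact Nat.zero_le 1
  | succ n ih =>
      rw [qpair_fst, q_succ]
      have := omega_pos hirr h0 n
      nlinarith [q_pos hirr h0 n]

omit hirr h0 in
lemma det_id (n : ℕ) :
    ((cfPPair x n).1 : ℤ) * (cfQPair x n).2 - (cfPPair x n).2 * (cfQPair x n).1 = (-1)^n := by
  induction n with
  | zero => simp [cfPPair, cfQPair]
  | succ n ih =>
      show ((cfPPair x n).2 : ℤ) * (cfOmega x n * (cfQPair x n).2 + (cfQPair x n).1)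
          - (cfOmega x n * (cfPPair x n).2 + (cfPPair x n).1) * (cfQPair x n).2 = (-1)^(n+1)
      push_cast
      push_cast at ih
      ring_nf
      ring_nf at ih
      linarith [ih]

/-- A n = q_n + q_{n-1} y_n -/
noncomputable def cfA (x : ℝ) (n : ℕ) : ℝ := (cfQ x n : ℝ) + ((cfQPair x n).1 : ℝ) * gaussMap^[n] x
noncomputable def cfB (x : ℝ) (n : ℕ) : ℝ := (cfP x n : ℝ) + ((cfPPair x n).1 : ℝ) * gaussMap^[n] x

lemma cfA_step (n : ℕ) : cfA x (n+1) = cfA x n * ((cfOmega x n : ℝ) + gaussMap^[n+1] x) := by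
  have hk := key_id hirr h0 n
  unfold cfA
  rw [qpair_fst, q_succ]
  push_cast
  nlinarith [hk]

lemma cfB_step (n : ℕ) : cfB x (n+1) = cfB x n * ((cfOmega x n : ℝ) + gaussMap^[n+1] x) := by
  have hk := key_id hirr h0 n
  unfold cfB
  rw [ppair_fst, p_succ]
  push_cast
  nlinarith [hk]

lemma main_id (n : ℕ) : x * cfA x n = cfB x n := by
  induction n with
  | zero => simp [cfA, cfB, cfQ, cfP, cfQPair, cfPPair]
  | succ n ih =>
      rw [cfA_step hirr h0, cfB_step hirr h0, ← ih]; ring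

lemma cfA_pos (n : ℕ) : 0 < cfA x n := by
  have h1 := q_pos hirr h0 n
  have h2 := (y_prop hirr h0 n).2
  unfold cfA
  have : (1:ℝ) ≤ (cfQ x n : ℝ) := by exact_mod_cast h1
  nlinarith [h2.1, (Nat.cast_nonneg (cfQPair x n).1 : (0:ℝ) ≤ _)]

lemma cfA_ge (n : ℕ) : (cfQ x n : ℝ) ≤ cfA x n := by
  have h2 := (y_prop hirr h0 n).2
  unfold cfA
  nlinarith [h2.1, (Nat.cast_nonneg (cfQPair x n).1 : (0:ℝ) ≤ _)]

lemma cfA_le (n : ℕ) : cfA x n ≤ 2 * (cfQ x n : ℝ) := by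
  have h2 := (y_prop hirr h0 n).2
  have h3 := qpair_fst_le hirr h0 n
  have h3' : ((cfQPair x n).1 : ℝ) ≤ (cfQ x n : ℝ) := by exact_mod_cast h3
  unfold cfA
  nlinarith [h2.1, h2.2, (Nat.cast_nonneg (cfQPair x n).1 : (0:ℝ) ≤ _)]

/-- The key distance identity: (x q_n - p_n) * A_n = (-1)^n y_n -/
lemma dist_id (n : ℕ) :
    (x * (cfQ x n : ℝ) - (cfP x n : ℝ)) * cfA x n = (-1)^n * gaussMap^[n] x := by
  have hm := main_id hirr h0 n
  have hd' : ((cfPPair x n).1 : ℝ) * (cfQPair x n).2 - (cfPPair x n).2 * (cfQPair x n).1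
      = (-1)^n := by exact_mod_cast det_id (x := x) n
  have expand : (x * (cfQ x n : ℝ) - (cfP x n : ℝ)) * cfA x n
      = (cfQ x n : ℝ) * (x * cfA x n) - (cfP x n : ℝ) * cfA x n := by ring
  rw [expand, hm]
  unfold cfB cfA cfQ cfP
  linear_combination (gaussMap^[n] x) * hd'
end

section
variable {x : ℝ} (hirr : Irrational x) (h0 : x ∈ Ioo (0:ℝ) 1)
include hirr h0

-- bounds on y_n
lemma y_bounds (n : ℕ) : 1 / (1 + (cfOmega x n : ℝ)) ≤ gaussMap^[n] x ∧
    gaussMap^[n] x * (cfOmega x n : ℝ) ≤ 1 := by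
  have hk := key_id hirr h0 n
  have hy := (y_prop hirr h0 n).2
  have hy1 := (y_prop hirr h0 (n+1)).2
  constructor
  · rw [div_le_iff₀ (by positivity)]
    nlinarith [hy.1, hy1.2]
  · nlinarith [hy.1, hy1.1]

lemma qQ_pos (n : ℕ) : (0:ℝ) < (cfQ x n : ℝ) := by
  exact_mod_cast Nat.lt_of_lt_of_le Nat.zero_lt_one (q_pos hirr h0 n)

/-- upper bound : |x - p_n/q_n| ≤ 1 / (ω_n q_n²) -/
lemma dist_upper (n : ℕ) :
    |x - (cfP x n : ℝ) / (cfQ x n : ℝ)| ≤ 1 / ((cfOmega x n : ℝ) * (cfQ x n : ℝ)^2) := by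
  have hq := qQ_pos hirr h0 n
  have hA := cfA_pos hirr h0 n
  have hAge := cfA_ge hirr h0 n
  have hy := (y_prop hirr h0 n).2
  have hyb := (y_bounds hirr h0 n).2
  have hω : (1:ℝ) ≤ (cfOmega x n : ℝ) := by exact_mod_cast omega_pos hirr h0 n
  have hid := dist_id hirr h0 n
  have habs : |x * (cfQ x n : ℝ) - (cfP x n : ℝ)| = gaussMap^[n] x / cfA x n := by
    have := abs_mul (x * (cfQ x n : ℝ) - (cfP x n : ℝ)) (cfA x n)
    rw [hid] at this
    rw [abs_mul, abs_pow, abs_neg, abs_one, one_pow, one_mul, abs_of_pos hy.1,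
      abs_of_pos hA] at this
    rw [eq_div_iff (ne_of_gt hA)]; linarith
  have hrw : x - (cfP x n : ℝ) / (cfQ x n : ℝ) = (x * (cfQ x n : ℝ) - (cfP x n : ℝ)) / (cfQ x n : ℝ) := by
    field_simp
  rw [hrw, abs_div, habs, abs_of_pos hq]
  rw [div_div, div_le_div_iff₀ (by positivity) (by positivity)]
  have h1 : gaussMap^[n] x * ((cfOmega x n : ℝ) * (cfQ x n : ℝ)^2) ≤ (cfQ x n:ℝ)^2 := by
    nlinarith [hy.1]
  rw [one_mul]
  calc gaussMap^[n] x * ((cfOmega x n : ℝ) * (cfQ x n : ℝ)^2) ≤ (cfQ x n:ℝ)^2 := h1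
    _ ≤ cfA x n * (cfQ x n:ℝ) := by nlinarith
  
/-- lower bound : 1/(2 (1+ω_n) q_n²) ≤ |x - p_n/q_n| -/
lemma dist_lower (n : ℕ) :
    1 / (2 * (1 + (cfOmega x n : ℝ)) * (cfQ x n : ℝ)^2) ≤ |x - (cfP x n : ℝ) / (cfQ x n : ℝ)| := by
  have hq := qQ_pos hirr h0 n
  have hA := cfA_pos hirr h0 n
  have hAle := cfA_le hirr h0 n
  have hy := (y_prop hirr h0 n).2
  have hyb := (y_bounds hirr h0 n).1
  have hω : (1:ℝ) ≤ (cfOmega x n : ℝ) := by exact_mod_cast omega_pos hirr h0 n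
  have hid := dist_id hirr h0 n
  have habs : |x * (cfQ x n : ℝ) - (cfP x n : ℝ)| = gaussMap^[n] x / cfA x n := by
    have := abs_mul (x * (cfQ x n : ℝ) - (cfP x n : ℝ)) (cfA x n)
    rw [hid] at this
    rw [abs_mul, abs_pow, abs_neg, abs_one, one_pow, one_mul, abs_of_pos hy.1,
      abs_of_pos hA] at this
    rw [eq_div_iff (ne_of_gt hA)]; linarith
  have hrw : x - (cfP x n : ℝ) / (cfQ x n : ℝ) = (x * (cfQ x n : ℝ) - (cfP x n : ℝ)) / (cfQ x n : ℝ) := by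
    field_simp
  rw [hrw, abs_div, habs, abs_of_pos hq]
  rw [div_div, div_le_div_iff₀ (by positivity) (by positivity)]
  have key : 1 / (1 + (cfOmega x n : ℝ)) ≤ gaussMap^[n] x := hyb
  have h2 : cfA x n * (cfQ x n : ℝ) ≤ 2 * (cfQ x n:ℝ)^2 := by nlinarith
  rw [one_mul]
  calc cfA x n * (cfQ x n : ℝ) ≤ 2 * (cfQ x n:ℝ)^2 := h2
    _ ≤ gaussMap^[n] x * (2 * (1 + (cfOmega x n : ℝ)) * (cfQ x n:ℝ)^2) := by
        rw [div_le_iff₀ (by positivity)] at key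
        nlinarith [sq_nonneg (cfQ x n : ℝ), hq]

/-- x is strictly between consecutive convergents -/
lemma sign_alt (n : ℕ) :
    (x - (cfP x n : ℝ) / (cfQ x n : ℝ)) * (x - (cfP x (n+1) : ℝ) / (cfQ x (n+1) : ℝ)) < 0 := by
  have hq := qQ_pos hirr h0 n
  have hq1 := qQ_pos hirr h0 (n+1)
  have hA := cfA_pos hirr h0 n
  have hA1 := cfA_pos hirr h0 (n+1)
  have hy := (y_prop hirr h0 n).2
  have hy1 := (y_prop hirr h0 (n+1)).2
  have hid := dist_id hirr h0 n
  have hid1 := dist_id hirr h0 (n+1)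
  have e1 : (x - (cfP x n : ℝ) / (cfQ x n : ℝ)) * (cfA x n * (cfQ x n : ℝ))
      = (-1)^n * gaussMap^[n] x := by
    rw [← hid]; field_simp
  have e2 : (x - (cfP x (n+1) : ℝ) / (cfQ x (n+1) : ℝ)) * (cfA x (n+1) * (cfQ x (n+1) : ℝ))
      = (-1)^(n+1) * gaussMap^[n+1] x := by
    rw [← hid1]; field_simp
  have hprod : ((x - (cfP x n : ℝ) / (cfQ x n : ℝ)) * (x - (cfP x (n+1) : ℝ) / (cfQ x (n+1) : ℝ)))
      * ((cfA x n * (cfQ x n : ℝ)) * (cfA x (n+1) * (cfQ x (n+1) : ℝ)))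
      = -(gaussMap^[n] x * gaussMap^[n+1] x) := by
    calc ((x - (cfP x n : ℝ) / (cfQ x n : ℝ)) * (x - (cfP x (n+1) : ℝ) / (cfQ x (n+1) : ℝ)))
          * ((cfA x n * (cfQ x n : ℝ)) * (cfA x (n+1) * (cfQ x (n+1) : ℝ)))
        = ((x - (cfP x n : ℝ) / (cfQ x n : ℝ)) * (cfA x n * (cfQ x n : ℝ)))
          * ((x - (cfP x (n+1) : ℝ) / (cfQ x (n+1) : ℝ)) * (cfA x (n+1) * (cfQ x (n+1) : ℝ))) := by
          ring
      _ = ((-1)^n * gaussMap^[n] x) * ((-1)^(n+1) * gaussMap^[n+1] x) := by rw [e1, e2]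
      _ = (((-1:ℝ))^n * (-1:ℝ)^(n+1)) * (gaussMap^[n] x * gaussMap^[n+1] x) := by ring
      _ = -(gaussMap^[n] x * gaussMap^[n+1] x) := by
          have hm1 : ((-1:ℝ))^n * (-1:ℝ)^(n+1) = -1 := by
            rw [← pow_add, show n+(n+1) = 2*n+1 from by ring, pow_succ, pow_mul]
            norm_num
          rw [hm1]; ring
  have hpos : 0 < (cfA x n * (cfQ x n : ℝ)) * (cfA x (n+1) * (cfQ x (n+1) : ℝ)) := by positivity
  nlinarith [hy.1, hy1.1, hprod, hpos]

/-- consecutive convergents difference -/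
lemma consec_diff (n : ℕ) :
    (cfP x n : ℝ) / (cfQ x n : ℝ) - (cfP x (n+1) : ℝ) / (cfQ x (n+1) : ℝ)
      = (-1)^(n+1) / ((cfQ x n : ℝ) * (cfQ x (n+1) : ℝ)) := by
  have hq := qQ_pos hirr h0 n
  have hq1 := qQ_pos hirr h0 (n+1)
  have hd : ((cfP x n : ℝ)) * (cfQ x (n+1)) - (cfP x (n+1)) * (cfQ x n) = (-1)^(n+1) := by
    exact_mod_cast det_id (x := x) (n+1)
  rw [div_sub_div _ _ (ne_of_gt hq) (ne_of_gt hq1), div_eq_div_iff (by positivity) (by positivity)]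
  linear_combination ((cfQ x n : ℝ) * (cfQ x (n+1) : ℝ)) * hd
end

noncomputable def cfS (x : ℝ) (n : ℕ) : ℝ := ∑ j ∈ Finset.range n, Real.log (1 + (cfOmega x j : ℝ))

section
variable {x : ℝ} (hirr : Irrational x) (h0 : x ∈ Ioo (0:ℝ) 1)
include hirr h0

lemma q_succ_le (n : ℕ) : cfQ x (n+1) ≤ (1 + cfOmega x n) * cfQ x n := by
  show cfOmega x n * cfQ x n + (cfQPair x n).1 ≤ _
  have := qpair_fst_le hirr h0 n
  nlinarith

lemma two_q_succ_ge (n : ℕ) : (1 + cfOmega x n) * cfQ x n ≤ 2 * cfQ x (n+1) := by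
  show _ ≤ 2 * (cfOmega x n * cfQ x n + (cfQPair x n).1)
  have := omega_pos hirr h0 n
  nlinarith [q_pos hirr h0 n]

lemma q_mono (n : ℕ) : cfQ x n ≤ cfQ x (n+1) := by
  show cfQ x n ≤ cfOmega x n * cfQ x n + (cfQPair x n).1
  have := omega_pos hirr h0 n
  nlinarith [q_pos hirr h0 n]

lemma q_mono' {m n : ℕ} (h : m ≤ n) : cfQ x m ≤ cfQ x n := by
  induction n with
  | zero => simpa [Nat.le_zero.1 h]
  | succ n ih =>
      rcases Nat.lt_or_ge m (n+1) with h' | h'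
      · exact le_trans (ih (by omega)) (q_mono hirr h0 n)
      · have : m = n+1 := by omega
        simp [this]

lemma q_ge (n : ℕ) : n ≤ cfQ x (n+1) := by
  induction n with
  | zero => omega
  | succ n ih =>
      show n + 1 ≤ cfOmega x (n+1) * cfQ x (n+1) + (cfQPair x (n+1)).1
      have h1 := omega_pos hirr h0 (n+1)
      have h2 : (cfQPair x (n+1)).1 = cfQ x n := rfl
      have h3 := q_pos hirr h0 n
      nlinarith

lemma q_two_step (n : ℕ) : 2 * cfQ x n ≤ cfQ x (n+2) := by
  show 2 * cfQ x n ≤ cfOmega x (n+1) * cfQ x (n+1) + (cfQPair x (n+1)).1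
  have h1 := omega_pos hirr h0 (n+1)
  have h2 : (cfQPair x (n+1)).1 = cfQ x n := rfl
  have h3 := q_mono hirr h0 n
  nlinarith [q_pos hirr h0 (n+1)]

lemma q_pow (n : ℕ) : 2^(n/2) ≤ cfQ x n := by
  induction n using Nat.strong_induction_on with
  | _ n ih =>
      match n with
      | 0 => simpa using q_pos hirr h0 0
      | 1 => simpa using q_pos hirr h0 1
      | (m+2) =>
          have h1 := ih m (by omega)
          have h2 := q_two_step hirr h0 m
          have : (m+2)/2 = m/2 + 1 := by omega
          rw [this, pow_succ]
          nlinarith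

lemma omega_cast_pos (n : ℕ) : (1:ℝ) ≤ (cfOmega x n : ℝ) := by
  exact_mod_cast omega_pos hirr h0 n

lemma S_ge (n : ℕ) : n * Real.log 2 ≤ cfS x n := by
  unfold cfS
  calc (n : ℝ) * Real.log 2 = ∑ _j ∈ Finset.range n, Real.log 2 := by
        rw [Finset.sum_const, Finset.card_range, nsmul_eq_mul]
    _ ≤ _ := by
        apply Finset.sum_le_sum
        intro j _
        apply Real.log_le_log (by norm_num)
        linarith [omega_cast_pos hirr h0 j]

lemma S_nonneg (n : ℕ) : 0 ≤ cfS x n := by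
  have := S_ge hirr h0 n
  have h2 : (0:ℝ) ≤ n * Real.log 2 := by positivity
  linarith

lemma logq_le_S (n : ℕ) : Real.log (cfQ x n) ≤ cfS x n := by
  induction n with
  | zero => simp [cfQ, cfQPair, cfS]
  | succ n ih =>
      have h1 := q_succ_le hirr h0 n
      have h1' : (cfQ x (n+1) : ℝ) ≤ (1 + (cfOmega x n : ℝ)) * cfQ x n := by exact_mod_cast h1
      have hq := q_pos hirr h0 (n+1)
      have hq' : (0:ℝ) < cfQ x (n+1) := by exact_mod_cast Nat.lt_of_lt_of_le Nat.zero_lt_one hq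
      have hqn : (0:ℝ) < cfQ x n := by
        exact_mod_cast Nat.lt_of_lt_of_le Nat.zero_lt_one (q_pos hirr h0 n)
      have hω := omega_cast_pos hirr h0 n
      calc Real.log (cfQ x (n+1)) ≤ Real.log ((1 + (cfOmega x n : ℝ)) * cfQ x n) :=
            Real.log_le_log hq' h1'
        _ = Real.log (1 + (cfOmega x n : ℝ)) + Real.log (cfQ x n) := by
            rw [Real.log_mul (by linarith) (ne_of_gt hqn)]
        _ ≤ Real.log (1 + (cfOmega x n : ℝ)) + cfS x n := by linarith
        _ = cfS x (n+1) := by rw [cfS, cfS, Finset.sum_range_succ]; ring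

lemma S_le_logq (n : ℕ) : cfS x n ≤ Real.log (cfQ x n) + n * Real.log 2 := by
  induction n with
  | zero => simp [cfQ, cfQPair, cfS]
  | succ n ih =>
      have h1 := two_q_succ_ge hirr h0 n
      have h1' : (1 + (cfOmega x n : ℝ)) * cfQ x n ≤ 2 * cfQ x (n+1) := by exact_mod_cast h1
      have hq' : (0:ℝ) < cfQ x (n+1) := by
        exact_mod_cast Nat.lt_of_lt_of_le Nat.zero_lt_one (q_pos hirr h0 (n+1))
      have hqn : (0:ℝ) < cfQ x n := by
        exact_mod_cast Nat.lt_of_lt_of_le Nat.zero_lt_one (q_pos hirr h0 n)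
      have hω := omega_cast_pos hirr h0 n
      have key : Real.log (1 + (cfOmega x n : ℝ)) + Real.log (cfQ x n)
          ≤ Real.log 2 + Real.log (cfQ x (n+1)) := by
        rw [← Real.log_mul (by linarith) (ne_of_gt hqn), ← Real.log_mul (by norm_num) (ne_of_gt hq')]
        exact Real.log_le_log (by positivity) h1'
      have hS : cfS x (n+1) = Real.log (1 + (cfOmega x n : ℝ)) + cfS x n := by
        rw [cfS, cfS, Finset.sum_range_succ]; ring
      rw [hS]
      push_cast
      linarith

lemma logq_ge_half_n (n : ℕ) : ((n:ℝ) - 1) / 2 * Real.log 2 ≤ Real.log (cfQ x n) := by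
  have h1 := q_pow hirr h0 n
  have h1' : (2:ℝ)^(n/2) ≤ cfQ x n := by exact_mod_cast h1
  have h2 : Real.log ((2:ℝ)^(n/2)) ≤ Real.log (cfQ x n) := Real.log_le_log (by positivity) h1'
  rw [Real.log_pow] at h2
  have h3 : ((n:ℝ) - 1) / 2 ≤ ((n/2 : ℕ) : ℝ) := by
    have : n ≤ 2 * (n/2) + 1 := by omega
    have : (n:ℝ) ≤ 2 * ((n/2 : ℕ):ℝ) + 1 := by exact_mod_cast this
    linarith
  nlinarith [Real.log_pos (by norm_num : (1:ℝ) < 2), h3, h2]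

lemma logq_ge_S (n : ℕ) : cfS x n / 4 - Real.log 2 ≤ Real.log (cfQ x n) := by
  have hlog2 : 0 < Real.log 2 := Real.log_pos (by norm_num)
  have hS0 := S_nonneg hirr h0 n
  have h1 := S_le_logq hirr h0 n
  have h2 := logq_ge_half_n hirr h0 n
  rcases le_or_gt ((n:ℝ) * Real.log 2) (3/4 * cfS x n) with h | h
  · linarith
  · nlinarith
end

/-- distance between distinct rationals -/
lemma rat_dist (r : ℚ) (a : ℤ) (b : ℕ) (hb : 0 < b) (hne : (r:ℝ) ≠ (a:ℝ)/(b:ℝ)) :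
    1/((r.den : ℝ) * b) ≤ |(r:ℝ) - (a:ℝ)/(b:ℝ)| := by
  have hden : (0:ℝ) < (r.den : ℝ) := by exact_mod_cast r.pos
  have hb' : (0:ℝ) < (b : ℝ) := by exact_mod_cast hb
  set k : ℤ := r.num * b - a * r.den with hk
  have hcast : (r:ℝ) - (a:ℝ)/(b:ℝ) = (k : ℝ) / ((r.den : ℝ) * b) := by
    rw [Rat.cast_def]
    push_cast
    field_simp
    rw [hk]
    push_cast
    ring
  have hk0 : k ≠ 0 := by
    intro h
    apply hne
    rw [h] at hcast
    simp at hcast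
    linarith
  have hk1 : (1:ℝ) ≤ |(k:ℝ)| := by
    rw [← Int.cast_abs]
    exact_mod_cast Int.one_le_abs hk0
  rw [hcast, abs_div, abs_of_pos (mul_pos hden hb')]
  gcongr

/-- convergents are in lowest terms -/
lemma coprime_pq {x : ℝ} (n : ℕ) : Nat.Coprime (cfP x n) (cfQ x n) := by
  have hd := det_id (x := x) n
  have hsq : ((-1:ℤ))^n * (-1:ℤ)^n = 1 := by
    rw [← pow_add, ← two_mul, pow_mul]; norm_num
  have hcop : IsCoprime (cfP x n : ℤ) (cfQ x n : ℤ) := by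
    refine ⟨-((cfQPair x n).1 : ℤ) * (-1)^n, ((cfPPair x n).1 : ℤ) * (-1)^n, ?_⟩
    have : cfP x n = (cfPPair x n).2 := rfl
    have : cfQ x n = (cfQPair x n).2 := rfl
    show -((cfQPair x n).1 : ℤ) * (-1)^n * (cfPPair x n).2
        + ((cfPPair x n).1 : ℤ) * (-1)^n * (cfQPair x n).2 = 1
    calc -((cfQPair x n).1 : ℤ) * (-1)^n * (cfPPair x n).2
        + ((cfPPair x n).1 : ℤ) * (-1)^n * (cfQPair x n).2
        = ((cfPPair x n).1 * (cfQPair x n).2 - (cfPPair x n).2 * (cfQPair x n).1) * (-1)^n := by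
          ring
      _ = (-1:ℤ)^n * (-1)^n := by rw [hd]
      _ = 1 := hsq
  have := Int.isCoprime_iff_gcd_eq_one.1 hcop
  rwa [Int.gcd_natCast_natCast] at this

/-- if r equals a convergent as a real number then its denominator is q_n -/
lemma den_convergent {x : ℝ} (hirr : Irrational x) (h0 : x ∈ Ioo (0:ℝ) 1) (n : ℕ) (r : ℚ)
    (h : (r:ℝ) = (cfP x n : ℝ)/(cfQ x n : ℝ)) : r.den = cfQ x n := by
  have hq := q_pos hirr h0 n
  have hq' : (0:ℤ) < (cfQ x n : ℤ) := by exact_mod_cast Nat.lt_of_lt_of_le Nat.zero_lt_one hq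
  have hr : r = ((cfP x n : ℤ) : ℚ) / ((cfQ x n : ℤ) : ℚ) := by
    have : ((((cfP x n : ℤ) : ℚ) / ((cfQ x n : ℤ) : ℚ) : ℚ) : ℝ) = (cfP x n : ℝ)/(cfQ x n : ℝ) := by
      push_cast; ring
    apply Rat.cast_injective (α := ℝ)
    rw [this, h]
  have hcop : Nat.Coprime (cfP x n : ℤ).natAbs (cfQ x n : ℤ).natAbs := by
    simpa using coprime_pq (x := x) n
  have := Rat.den_div_eq_of_coprime hq' hcop
  rw [← hr] at this
  exact_mod_cast this

/-- rationals with bounded denominator and absolute value form a finite set -/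
lemma finite_rats (B : ℝ) (D : ℕ) : {r : ℚ | |(r:ℝ)| ≤ B ∧ r.den ≤ D}.Finite := by
  apply Set.Finite.subset
    (Set.Finite.image (f := fun p : ℤ × ℕ => ((p.1 : ℚ) / (p.2 : ℚ)))
      (Set.Finite.prod (Set.finite_Icc (-⌈B⌉ * D) (⌈B⌉ * D)) (Set.finite_Icc 0 D)))
  intro r ⟨h1, h2⟩
  refine ⟨(r.num, r.den), ⟨?_, ?_, h2⟩, ?_⟩
  · have hnum : |(r.num : ℝ)| ≤ B * D := by
      have hmul : |(r:ℝ)| * r.den ≤ B * D := by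
        apply mul_le_mul h1 (by exact_mod_cast h2) (by positivity) (by
          rcases le_or_gt 0 B with h|h
          · exact h
          · exfalso; have := abs_nonneg ((r:ℝ)); linarith)
      calc |(r.num : ℝ)| = |(r:ℝ)| * r.den := by
            rw [Rat.cast_def, abs_div]
            have : |(r.den : ℝ)| = (r.den : ℝ) := abs_of_pos (by exact_mod_cast r.pos)
            rw [this]
            field_simp
        _ ≤ B * D := hmul
    have hBD : (B * D : ℝ) ≤ ((⌈B⌉ * (D:ℤ) : ℤ) : ℝ) := by
      push_cast
      exact mul_le_mul_of_nonneg_right (Int.le_ceil B) (by positivity)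
    have h5 : |(r.num : ℝ)| ≤ ((⌈B⌉ * (D:ℤ) : ℤ) : ℝ) := le_trans hnum hBD
    have habs : |r.num| ≤ ⌈B⌉ * (D:ℤ) := by exact_mod_cast h5
    rw [abs_le] at habs
    simp only [Set.mem_Icc]
    exact ⟨by linarith [habs.1], habs.2⟩
  · simp
  · show ((r.num : ℚ) / (r.den : ℚ)) = r
    exact Rat.num_div_den r

section
variable {x : ℝ} (hirr : Irrational x) (h0 : x ∈ Ioo (0:ℝ) 1)
include hirr h0

lemma qR_pos (n : ℕ) : (0:ℝ) < (cfQ x n : ℝ) := by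
  exact_mod_cast Nat.lt_of_lt_of_le Nat.zero_lt_one (q_pos hirr h0 n)

lemma omegaR_one (n : ℕ) : (1:ℝ) ≤ (cfOmega x n : ℝ) := by
  exact_mod_cast omega_pos hirr h0 n

/-- helper: bound for being equal to the convergent p_m/q_m -/
lemma conv_case {c : ℝ} (hc : 0 < c) (m : ℕ) (r : ℚ)
    (heq : (r:ℝ) = (cfP x m : ℝ)/(cfQ x m : ℝ))
    (hr : |x - (r:ℝ)| ≤ (r.den : ℝ) ^ (-(2+c))) :
    c * Real.log (cfQ x m) - Real.log 2 ≤ Real.log (1 + (cfOmega x m : ℝ)) := by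
  have hden := den_convergent hirr h0 m r heq
  have hq := qR_pos hirr h0 m
  have hω := omegaR_one hirr h0 m
  have hlow := dist_lower hirr h0 m
  rw [← heq] at hlow
  have hchain : 1 / (2 * (1 + (cfOmega x m : ℝ)) * (cfQ x m : ℝ)^2)
      ≤ (cfQ x m : ℝ) ^ (-(2+c)) := by
    calc 1 / (2 * (1 + (cfOmega x m : ℝ)) * (cfQ x m : ℝ)^2) ≤ |x - (r:ℝ)| := hlow
      _ ≤ (r.den : ℝ) ^ (-(2+c)) := hr
      _ = (cfQ x m : ℝ) ^ (-(2+c)) := by rw [hden]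
  have hlog := Real.log_le_log (by positivity) hchain
  rw [Real.log_rpow hq, Real.log_div (by norm_num) (by positivity), Real.log_one,
    Real.log_mul (by positivity) (by positivity), Real.log_mul (by norm_num) (by positivity),
    Real.log_pow] at hlog
  push_cast at hlog
  linarith

/-- key dichotomy: every good rational approximation gives a large partial quotient -/
lemma forward_step {c : ℝ} (hc : 0 < c) (r : ℚ)
    (hr : |x - (r:ℝ)| ≤ (r.den : ℝ) ^ (-(2+c))) :
    ∃ m : ℕ, (r.den : ℝ) < 2 * (cfQ x (m+1) : ℝ) ∧
      c * Real.log (cfQ x m) - Real.log 2 ≤ Real.log (1 + (cfOmega x m : ℝ)) := by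
  set q : ℕ := r.den with hqdef
  have hq1 : 1 ≤ q := r.pos
  have hqR : (0:ℝ) < (q:ℝ) := by exact_mod_cast hq1
  -- minimal n with q < q_n + q_{n+1}
  have hex : ∃ n, q < cfQ x n + cfQ x (n+1) := by
    refine ⟨q+1, ?_⟩
    have h1 := q_ge hirr h0 q
    have h2 := q_pos hirr h0 (q+2)
    have h3 := q_mono hirr h0 (q+1)
    omega
  set n := Nat.find hex with hndef
  have hn : q < cfQ x n + cfQ x (n+1) := Nat.find_spec hex
  have hqn : cfQ x n ≤ q := by
    match hn' : n with
    | 0 => simpa [cfQ, cfQPair] using hq1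
    | k+1 =>
        have := Nat.find_min hex (m := k) (by omega)
        have h3 := q_mono hirr h0 k
        omega
  have hqnR : (cfQ x n : ℝ) ≤ (q:ℝ) := by exact_mod_cast hqn
  set a : ℝ := (cfP x n : ℝ)/(cfQ x n : ℝ) with hadef
  set b : ℝ := (cfP x (n+1) : ℝ)/(cfQ x (n+1) : ℝ) with hbdef
  have hqnpos := qR_pos hirr h0 n
  have hqn1pos := qR_pos hirr h0 (n+1)
  have hmono : (cfQ x n : ℝ) ≤ (cfQ x (n+1) : ℝ) := by exact_mod_cast q_mono hirr h0 n
  by_cases hra0 : (r:ℝ) = a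
  · refine ⟨n, ?_, conv_case hirr h0 hc n r hra0 hr⟩
    have : (q : ℝ) = cfQ x n := by
      rw [hqdef, den_convergent hirr h0 n r hra0]
    rw [this]
    linarith
  by_cases hrb0 : (r:ℝ) = b
  · refine ⟨n+1, ?_, conv_case hirr h0 hc (n+1) r hrb0 hr⟩
    have : (q : ℝ) = cfQ x (n+1) := by
      rw [hqdef, den_convergent hirr h0 (n+1) r hrb0]
    rw [this]
    have := qR_pos hirr h0 (n+2)
    have hm2 : (cfQ x (n+1) : ℝ) ≤ (cfQ x (n+2) : ℝ) := by exact_mod_cast q_mono hirr h0 (n+1)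
    linarith
  -- r is not a convergent; get the rational distance bounds
  have hra : 1/((q : ℝ) * (cfQ x n : ℝ)) ≤ |(r:ℝ) - a| := by
    have := rat_dist r (cfP x n : ℤ) (cfQ x n)
      (Nat.lt_of_lt_of_le Nat.zero_lt_one (q_pos hirr h0 n)) (by push_cast; exact hra0)
    push_cast at this
    exact this
  have hrb : 1/((q : ℝ) * (cfQ x (n+1) : ℝ)) ≤ |(r:ℝ) - b| := by
    have := rat_dist r (cfP x (n+1) : ℤ) (cfQ x (n+1))
      (Nat.lt_of_lt_of_le Nat.zero_lt_one (q_pos hirr h0 (n+1))) (by push_cast; exact hrb0)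
    push_cast at this
    exact this
  have hdiff : |a - b| = 1/((cfQ x n : ℝ) * (cfQ x (n+1) : ℝ)) := by
    rw [hadef, hbdef, consec_diff hirr h0 n, abs_div, abs_pow, abs_neg, abs_one, one_pow,
      abs_of_pos (by positivity)]
  have hsign := sign_alt hirr h0 n
  rw [← hadef, ← hbdef] at hsign
  rcases lt_trichotomy (((r:ℝ) - a) * ((r:ℝ) - b)) 0 with hout | hout | hout
  · -- r strictly between a and b : impossible since q < q_n + q_{n+1}
    exfalso
    have hsum : |(r:ℝ) - a| + |(r:ℝ) - b| = |a - b| := by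
      rcases mul_neg_iff.1 hout with ⟨h1, h2⟩ | ⟨h1, h2⟩
      · rw [abs_of_pos h1, abs_of_neg h2, abs_of_neg (by linarith : a - b < 0)]; ring
      · rw [abs_of_neg h1, abs_of_pos h2, abs_of_pos (by linarith : 0 < a - b)]; ring
    rw [hdiff] at hsum
    have hkey : 1/((q : ℝ) * (cfQ x n : ℝ)) + 1/((q : ℝ) * (cfQ x (n+1) : ℝ))
        ≤ 1/((cfQ x n : ℝ) * (cfQ x (n+1) : ℝ)) := by linarith
    have hcontr : (cfQ x n : ℝ) + (cfQ x (n+1) : ℝ) ≤ (q : ℝ) := by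
      rw [div_add_div _ _ (by positivity) (by positivity),
        div_le_div_iff₀ (by positivity) (by positivity)] at hkey
      nlinarith [hkey, mul_pos (mul_pos hqR hqnpos) hqn1pos]
    have : (q:ℝ) < (cfQ x n : ℝ) + (cfQ x (n+1) : ℝ) := by exact_mod_cast hn
    linarith
  · exfalso
    rcases mul_eq_zero.1 hout with h | h
    · exact hra0 (by linarith)
    · exact hrb0 (by linarith)
  · -- r outside [a,b] : |x - r| ≥ 1/(q q_{n+1})
    have hbound : 1/((q : ℝ) * (cfQ x (n+1) : ℝ)) ≤ |x - (r:ℝ)| := by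
      have hab : 1/((q : ℝ) * (cfQ x (n+1) : ℝ)) ≤ 1/((q : ℝ) * (cfQ x n : ℝ)) := by
        gcongr
      rcases mul_pos_iff.1 hout with ⟨h1, h2⟩ | ⟨h1, h2⟩
      · -- r > a and r > b
        rcases mul_neg_iff.1 hsign with ⟨h3, h4⟩ | ⟨h3, h4⟩
        · -- a < x < b
          rw [abs_of_pos h2] at hrb
          rw [abs_of_neg (by linarith : x - (r:ℝ) < 0)]
          linarith
        · -- b < x < a
          rw [abs_of_pos h1] at hra
          rw [abs_of_neg (by linarith : x - (r:ℝ) < 0)]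
          linarith
      · -- r < a and r < b
        rcases mul_neg_iff.1 hsign with ⟨h3, h4⟩ | ⟨h3, h4⟩
        · rw [abs_of_neg h1] at hra
          rw [abs_of_pos (by linarith : 0 < x - (r:ℝ))]
          linarith
        · rw [abs_of_neg h2] at hrb
          rw [abs_of_pos (by linarith : 0 < x - (r:ℝ))]
          linarith
    have hnR : (q:ℝ) < (cfQ x n : ℝ) + (cfQ x (n+1) : ℝ) := by exact_mod_cast hn
    refine ⟨n, by linarith, ?_⟩
    -- combine: 1/(q q_{n+1}) ≤ q^{-(2+c)}
    have hchain : 1/((q : ℝ) * (cfQ x (n+1) : ℝ)) ≤ (q : ℝ) ^ (-(2+c)) :=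
      le_trans hbound hr
    have hlog := Real.log_le_log (by positivity) hchain
    rw [Real.log_rpow hqR, Real.log_div (by norm_num) (by positivity), Real.log_one,
      Real.log_mul (by positivity) (by positivity)] at hlog
    -- log q_{n+1} ≥ (1+c) log q ≥ (1+c) log q_n
    have hlq : Real.log (cfQ x n) ≤ Real.log q := Real.log_le_log hqnpos hqnR
    have hlqn : 0 ≤ Real.log (cfQ x n) := by
      apply Real.log_nonneg
      exact_mod_cast q_pos hirr h0 n
    -- q_{n+1} ≤ (1+ω_n) q_n
    have hqsucc : (cfQ x (n+1) : ℝ) ≤ (1 + (cfOmega x n : ℝ)) * (cfQ x n : ℝ) := by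
      exact_mod_cast q_succ_le hirr h0 n
    have hω := omegaR_one hirr h0 n
    have hlsucc : Real.log (cfQ x (n+1)) ≤ Real.log (1 + (cfOmega x n : ℝ)) + Real.log (cfQ x n) := by
      calc Real.log (cfQ x (n+1)) ≤ Real.log ((1 + (cfOmega x n : ℝ)) * (cfQ x n : ℝ)) :=
            Real.log_le_log hqn1pos hqsucc
        _ = _ := Real.log_mul (by positivity) (by positivity)
    have hlogq : 0 ≤ Real.log q := Real.log_nonneg (by exact_mod_cast hq1)
    have hlog2 : (0:ℝ) < Real.log 2 := Real.log_pos (by norm_num)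
    have hmul := mul_le_mul_of_nonneg_left hlq (by linarith : (0:ℝ) ≤ 1+c)
    linarith [hlog, hlsucc, hmul, hlog2.le]
end

section
variable {x : ℝ} (hirr : Irrational x) (h0 : x ∈ Ioo (0:ℝ) 1)
include hirr h0

lemma forward {c : ℝ} (hc : 0 < c)
    (H : ∀ ε : ℝ, 0 < ε → {r : ℚ | |x - (r : ℝ)| ≤ ε * (r.den : ℝ) ^ (-(2 + c))}.Infinite) :
    {n : ℕ | c/8 * cfS x n ≤ Real.log (1 + (cfOmega x n : ℝ))}.Infinite := by
  have hS : {r : ℚ | |x - (r : ℝ)| ≤ (r.den : ℝ) ^ (-(2 + c))}.Infinite := by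
    have := H 1 one_pos
    simpa using this
  -- denominators are unbounded
  have hdens : ∀ D : ℕ, ∃ r : ℚ, |x - (r : ℝ)| ≤ (r.den : ℝ) ^ (-(2 + c)) ∧ D < r.den := by
    intro D
    by_contra hcon
    push_neg at hcon
    apply hS
    apply Set.Finite.subset (finite_rats (|x| + 1) D)
    intro r hr
    have hle : r.den ≤ D := hcon r hr
    have h1 : (r.den : ℝ) ^ (-(2+c)) ≤ 1 := by
      apply Real.rpow_le_one_of_one_le_of_nonpos
      · exact_mod_cast r.pos
      · linarith
    have h2 : |(r:ℝ)| ≤ |x| + 1 := by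
      have := abs_sub_abs_le_abs_sub (r:ℝ) x
      have h3 : |(r:ℝ) - x| = |x - (r:ℝ)| := abs_sub_comm _ _
      simp only [Set.mem_setOf_eq] at hr
      linarith
    exact ⟨h2, hle⟩
  intro hfin
  obtain ⟨M, hM⟩ := hfin.bddAbove
  set K : ℕ := max (M+1) (⌈8*(c+1)/c⌉₊ + 1) with hKdef
  obtain ⟨r, hr, hrden⟩ := hdens (2 * cfQ x (K+1))
  obtain ⟨m, hm1, hm2⟩ := forward_step hirr h0 hc r hr
  -- m > K
  have hmK : K < m := by
    by_contra hcon
    push_neg at hcon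
    have h4 : cfQ x (m+1) ≤ cfQ x (K+1) := q_mono' hirr h0 (by omega)
    have h4R : (cfQ x (m+1) : ℝ) ≤ (cfQ x (K+1) : ℝ) := by exact_mod_cast h4
    have h5 : (2 * cfQ x (K+1) : ℕ) < r.den := hrden
    have h5R : 2 * (cfQ x (K+1) : ℝ) < (r.den : ℝ) := by exact_mod_cast h5
    linarith
  -- m is in the set
  apply absurd (hM ?_) (by omega : ¬ m ≤ M)
  show c/8 * cfS x m ≤ Real.log (1 + (cfOmega x m : ℝ))
  have h6 := logq_ge_S hirr h0 m
  have h7 := S_ge hirr h0 m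
  have hlog2 : (0:ℝ) < Real.log 2 := Real.log_pos (by norm_num)
  have hKm : (8*(c+1)/c : ℝ) ≤ (m : ℝ) := by
    have : (⌈8*(c+1)/c⌉₊ : ℝ) ≤ (m:ℝ) := by
      have : ⌈8*(c+1)/c⌉₊ ≤ m := by omega
      exact_mod_cast this
    linarith [Nat.le_ceil (8*(c+1)/c)]
  -- chain of inequalities
  have e1 : c/8 * ((8*(c+1)/c) * Real.log 2) = (c+1) * Real.log 2 := by
    field_simp
  have h8 : (c+1) * Real.log 2 ≤ c/8 * cfS x m := by
    calc (c+1) * Real.log 2 = c/8 * ((8*(c+1)/c) * Real.log 2) := e1.symm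
      _ ≤ c/8 * ((m:ℝ) * Real.log 2) := by
          apply mul_le_mul_of_nonneg_left _ (by positivity)
          exact mul_le_mul_of_nonneg_right hKm hlog2.le
      _ ≤ c/8 * cfS x m := by
          apply mul_le_mul_of_nonneg_left h7 (by positivity)
  have h9 : c * (cfS x m / 4 - Real.log 2) ≤ c * Real.log (cfQ x m) :=
    mul_le_mul_of_nonneg_left h6 hc.le
  linarith

lemma reverse {c : ℝ} (hc : 0 < c)
    (hT : {n : ℕ | c * cfS x n ≤ Real.log (1 + (cfOmega x n : ℝ))}.Infinite) :
    ∀ ε : ℝ, 0 < ε → {r : ℚ | |x - (r : ℝ)| ≤ ε * (r.den : ℝ) ^ (-(2 + c/2))}.Infinite := by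
  intro ε hε
  -- per-index membership
  have key : ∀ n : ℕ, c * cfS x n ≤ Real.log (1 + (cfOmega x n : ℝ)) →
      2/ε ≤ (cfQ x n : ℝ)^(c/2) →
      |x - (((cfP x n : ℚ)/(cfQ x n : ℚ) : ℚ) : ℝ)|
        ≤ ε * ((((cfP x n : ℚ)/(cfQ x n : ℚ) : ℚ)).den : ℝ) ^ (-(2 + c/2)) := by
    intro n hn hbig
    have hqn : (0:ℝ) < (cfQ x n : ℝ) := by
      exact_mod_cast Nat.lt_of_lt_of_le Nat.zero_lt_one (q_pos hirr h0 n)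
    have hω : (1:ℝ) ≤ (cfOmega x n : ℝ) := by exact_mod_cast omega_pos hirr h0 n
    have hcast : (((cfP x n : ℚ)/(cfQ x n : ℚ) : ℚ) : ℝ) = (cfP x n : ℝ)/(cfQ x n : ℝ) := by
      push_cast
      ring
    have hden : ((cfP x n : ℚ)/(cfQ x n : ℚ) : ℚ).den = cfQ x n :=
      den_convergent hirr h0 n _ hcast
    rw [hcast, hden]
    -- q_n ^ c ≤ 1 + ω_n
    have h1 : (cfQ x n : ℝ)^(c:ℝ) ≤ 1 + (cfOmega x n : ℝ) := by
      have h2 : c * Real.log (cfQ x n) ≤ Real.log (1 + (cfOmega x n : ℝ)) := by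
        have := mul_le_mul_of_nonneg_left (logq_le_S hirr h0 n) hc.le
        linarith
      calc (cfQ x n : ℝ)^(c:ℝ) = Real.exp (Real.log (cfQ x n) * c) := Real.rpow_def_of_pos hqn c
        _ ≤ Real.exp (Real.log (1 + (cfOmega x n : ℝ))) := by
            apply Real.exp_le_exp.2
            linarith
        _ = 1 + (cfOmega x n : ℝ) := Real.exp_log (by linarith)
    have hup := dist_upper hirr h0 n
    have hpowc : (0:ℝ) < (cfQ x n : ℝ)^(c:ℝ) := Real.rpow_pos_of_pos hqn c
    have hpowc2 : (0:ℝ) < (cfQ x n : ℝ)^(c/2:ℝ) := Real.rpow_pos_of_pos hqn _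
    have hpow22 : (0:ℝ) < (cfQ x n : ℝ)^(-(2+c/2):ℝ) := Real.rpow_pos_of_pos hqn _
    have hq2 : (cfQ x n : ℝ)^((2:ℝ)+c) = (cfQ x n : ℝ)^2 * (cfQ x n : ℝ)^(c:ℝ) := by
      rw [Real.rpow_add hqn]
      congr 1
      rw [← Real.rpow_natCast (cfQ x n : ℝ) 2]
      norm_num
    have hA' : (cfQ x n:ℝ)^2 * (cfQ x n:ℝ)^(c:ℝ) ≤ 2 * ((cfOmega x n : ℝ) * (cfQ x n : ℝ)^2) := by
      nlinarith [mul_le_mul_of_nonneg_left h1 (sq_nonneg (cfQ x n:ℝ))]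
    have hA : 1/((cfOmega x n : ℝ) * (cfQ x n : ℝ)^2) ≤ 2 * (cfQ x n : ℝ)^(-((2:ℝ)+c)) := by
      rw [Real.rpow_neg hqn.le, hq2]
      rw [show (2:ℝ) * ((cfQ x n:ℝ)^2 * (cfQ x n:ℝ)^(c:ℝ))⁻¹
          = 2 / ((cfQ x n:ℝ)^2 * (cfQ x n:ℝ)^(c:ℝ)) from (div_eq_mul_inv 2 _).symm]
      rw [div_le_div_iff₀ (by positivity) (by positivity)]
      nlinarith [hA']
    have hsplit : (cfQ x n : ℝ)^(-((2:ℝ)+c)) = (cfQ x n : ℝ)^(-(c/2)) * (cfQ x n : ℝ)^(-(2+c/2)) := by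
      rw [← Real.rpow_add hqn]
      congr 1
      ring
    have hfac : 2 * (cfQ x n : ℝ)^(-(c/2)) ≤ ε := by
      rw [Real.rpow_neg hqn.le]
      have h2ε : (0:ℝ) < 2/ε := by positivity
      have := one_div_le_one_div_of_le h2ε hbig
      rw [one_div, one_div] at this
      calc 2 * ((cfQ x n : ℝ)^(c/2))⁻¹ ≤ 2 * (2/ε)⁻¹ := by
            apply mul_le_mul_of_nonneg_left this (by norm_num)
        _ = ε := by field_simp
    calc |x - (cfP x n : ℝ)/(cfQ x n : ℝ)| ≤ 1/((cfOmega x n : ℝ) * (cfQ x n : ℝ)^2) := hup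
      _ ≤ 2 * (cfQ x n : ℝ)^(-((2:ℝ)+c)) := hA
      _ = (2 * (cfQ x n : ℝ)^(-(c/2))) * (cfQ x n : ℝ)^(-(2+c/2)) := by rw [hsplit]; ring
      _ ≤ ε * (cfQ x n : ℝ)^(-(2+c/2)) := by
          apply mul_le_mul_of_nonneg_right hfac hpow22.le
  -- now prove the set is infinite
  intro hfin
  -- threshold
  set N : ℕ := ⌈(2/ε)^((2:ℝ)/c)⌉₊ + 2 with hNdef
  have hbig_of : ∀ n : ℕ, N ≤ n → 2/ε ≤ (cfQ x n : ℝ)^(c/2) := by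
    intro n hNn
    have hn1 : 1 ≤ n := by omega
    have hq : n - 1 ≤ cfQ x n := by
      have := q_ge hirr h0 (n-1)
      rwa [Nat.sub_add_cancel hn1] at this
    have hqR : ((n:ℝ) - 1) ≤ (cfQ x n : ℝ) := by
      have : ((n - 1 : ℕ) : ℝ) ≤ (cfQ x n : ℝ) := by exact_mod_cast hq
      rw [Nat.cast_sub hn1] at this
      simpa using this
    have hceil : ((2/ε)^((2:ℝ)/c)) ≤ ((n:ℝ) - 1) := by
      have h1 : (⌈(2/ε)^((2:ℝ)/c)⌉₊ : ℝ) ≤ (n:ℝ) - 1 := by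
        have : (⌈(2/ε)^((2:ℝ)/c)⌉₊ + 1 : ℕ) ≤ n := by omega
        have h2 : ((⌈(2/ε)^((2:ℝ)/c)⌉₊ + 1 : ℕ) : ℝ) ≤ (n:ℝ) := by exact_mod_cast this
        push_cast at h2
        linarith
      linarith [Nat.le_ceil ((2/ε)^((2:ℝ)/c))]
    have hbase : ((2/ε)^((2:ℝ)/c)) ≤ (cfQ x n : ℝ) := le_trans hceil hqR
    have h2ε : (0:ℝ) ≤ 2/ε := by positivity
    calc 2/ε = ((2/ε)^((2:ℝ)/c))^(c/2) := by
          rw [← Real.rpow_mul h2ε]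
          rw [show (2:ℝ)/c * (c/2) = 1 from by field_simp]
          exact (Real.rpow_one _).symm
      _ ≤ (cfQ x n : ℝ)^(c/2) := by
          apply Real.rpow_le_rpow (Real.rpow_nonneg h2ε _) hbase (by positivity)
  -- the convergents with large index in T are in our set, and there are infinitely many distinct
  set T := {n : ℕ | c * cfS x n ≤ Real.log (1 + (cfOmega x n : ℝ))} with hTdef
  set S' := {r : ℚ | |x - (r : ℝ)| ≤ ε * (r.den : ℝ) ^ (-(2 + c/2))} with hS'def
  have hmem : ∀ n ∈ T, N ≤ n → ((cfP x n : ℚ)/(cfQ x n : ℚ) : ℚ) ∈ S' := by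
    intro n hn hNn
    have := key n hn (hbig_of n hNn)
    exact this
  set R := (fun n : ℕ => ((cfP x n : ℚ)/(cfQ x n : ℚ) : ℚ)) '' (T ∩ Ici N) with hRdef
  have hRsub : R ⊆ S' := by
    rintro r ⟨n, ⟨hnT, hnN⟩, rfl⟩
    exact hmem n hnT hnN
  have hRfin : R.Finite := hfin.subset hRsub
  obtain ⟨n₀, hn₀T, hn₀⟩ := hT.exists_gt N
  have hRne : R.Nonempty := ⟨_, ⟨n₀, ⟨hn₀T, le_of_lt hn₀⟩, rfl⟩⟩
  obtain ⟨r₀, hr₀R, hmin⟩ := Set.exists_min_image R (fun r => |x - (r:ℝ)|) hRfin hRne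
  have hδ : 0 < |x - (r₀:ℝ)| := abs_pos.2 (sub_ne_zero.2 (hirr.ne_rat r₀))
  set δ := |x - (r₀:ℝ)| with hδdef
  obtain ⟨n, hnT, hn⟩ := hT.exists_gt (max N (⌈1/δ⌉₊ + 2))
  have hnN : N ≤ n := le_trans (le_max_left _ _) hn.le
  have hn2 : ⌈1/δ⌉₊ + 2 ≤ n := le_trans (le_max_right _ _) hn.le
  have hrnR : ((cfP x n : ℚ)/(cfQ x n : ℚ) : ℚ) ∈ R := ⟨n, ⟨hnT, hnN⟩, rfl⟩
  have hmin' := hmin _ hrnR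
  -- but |x - r_n| ≤ 1/q_n ≤ 1/(n-1) < δ
  have hqn : (0:ℝ) < (cfQ x n : ℝ) := by
    exact_mod_cast Nat.lt_of_lt_of_le Nat.zero_lt_one (q_pos hirr h0 n)
  have hω : (1:ℝ) ≤ (cfOmega x n : ℝ) := by exact_mod_cast omega_pos hirr h0 n
  have hcast : (((cfP x n : ℚ)/(cfQ x n : ℚ) : ℚ) : ℝ) = (cfP x n : ℝ)/(cfQ x n : ℝ) := by
    push_cast
    ring
  have hup := dist_upper hirr h0 n
  have hqge : ((n:ℝ) - 1) ≤ (cfQ x n : ℝ) := by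
    have hn1 : 1 ≤ n := by omega
    have hq : n - 1 ≤ cfQ x n := by
      have := q_ge hirr h0 (n-1)
      rwa [Nat.sub_add_cancel hn1] at this
    have : ((n - 1 : ℕ) : ℝ) ≤ (cfQ x n : ℝ) := by exact_mod_cast hq
    rw [Nat.cast_sub hn1] at this
    simpa using this
  have hqbig : 1/δ + 1 ≤ (cfQ x n : ℝ) := by
    have h3 : (⌈1/δ⌉₊ + 2 : ℝ) ≤ (n:ℝ) := by exact_mod_cast hn2
    have h4 := Nat.le_ceil (1/δ)
    push_cast at h3
    linarith
  have hq1' : (1:ℝ) ≤ (cfQ x n : ℝ) := by exact_mod_cast q_pos hirr h0 n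
  have hd1 : 1/((cfOmega x n : ℝ) * (cfQ x n : ℝ)^2) ≤ 1/(cfQ x n : ℝ) := by
    apply div_le_div_of_nonneg_left (by norm_num) hqn
    nlinarith [mul_nonneg (sub_nonneg.2 hω) (sq_nonneg (cfQ x n : ℝ)),
      mul_nonneg (sub_nonneg.2 hq1') hqn.le]
  have hd2 : 1/(cfQ x n : ℝ) < δ := by
    rw [div_lt_iff₀ hqn]
    have h5 : (0:ℝ) < 1/δ + 1 := by positivity
    calc (1:ℝ) = δ * (1/δ) := by field_simp
      _ < δ * (cfQ x n : ℝ) := by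
          apply mul_lt_mul_of_pos_left _ hδ
          linarith
  have : |x - (((cfP x n : ℚ)/(cfQ x n : ℚ) : ℚ) : ℝ)| < δ := by
    rw [hcast]
    calc |x - (cfP x n : ℝ)/(cfQ x n : ℝ)| ≤ 1/((cfOmega x n : ℝ) * (cfQ x n : ℝ)^2) := hup
      _ ≤ 1/(cfQ x n : ℝ) := hd1
      _ < δ := hd2
  have hmin'' : δ ≤ |x - (((cfP x n : ℚ)/(cfQ x n : ℚ) : ℚ) : ℝ)| := hmin'
  linarith
end

theorem stmt5 (x : ℝ) (hx : x ∈ Icc (0:ℝ) 1) (hirr : Irrational x) :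
    (∃ c : ℝ, 0 < c ∧ ∀ ε : ℝ, 0 < ε →
        {r : ℚ | |x - (r : ℝ)| ≤ ε * (r.den : ℝ) ^ (-(2 + c))}.Infinite) ↔
      (∃ c : ℝ, 0 < c ∧
        {n : ℕ | c * ∑ j ∈ Finset.range n, Real.log (1 + (cfOmega x j : ℝ))
          ≤ Real.log (1 + (cfOmega x n : ℝ))}.Infinite) := by
  have hne0 : x ≠ 0 := by simpa using hirr.ne_int 0
  have hne1 : x ≠ 1 := by simpa using hirr.ne_int 1
  have h0 : x ∈ Ioo (0:ℝ) 1 := ⟨lt_of_le_of_ne hx.1 (Ne.symm hne0), lt_of_le_of_ne hx.2 hne1⟩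
  constructor
  · rintro ⟨c, hc, H⟩
    exact ⟨c/8, by positivity, forward hirr h0 hc H⟩
  · rintro ⟨c, hc, hT⟩
    exact ⟨c/2, by positivity, reverse hirr h0 hc hT⟩
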